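/- Let 0 < δ ≤ 1 and ε > 0. Let K be a set of k vertices inside a vertex set V of size n, and suppose each of the k(n−k) unordered pairs (i,j) with i ∈ K, j ∈ V\K is independently joined by an edge with probability q. Then with probability at least 1 − k^{−ε/3}, cut_G(K) ≤ (1+δ)·q·k·(n−k) + (e·ε/δ² + ε/3)·log k, where cut_G(K) is the number of realized edges between K and V\K. -/

import Mathlib

open MeasureTheory ProbabilityTheory

set_option maxHeartbeats 1000000 in
/-- mgf of a Bernoulli-type 0/1 random variable. -/
lemma mgf_bernoulli_aux {Ω : Type} [MeasurableSpace Ω] (μ : Measure Ω) [IsProbabilityMeasure μ]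
    (B : Ω → Bool) (hB : Measurable B) (q t : ℝ) (hq : μ {ω | B ω = true} = ENNReal.ofReal q)
    (hq0 : 0 ≤ q) :
      Integrable (fun ω => Real.exp (t * (if B ω = true then (1:ℝ) else 0))) μ ∧
      mgf (fun ω => if B ω = true then (1:ℝ) else 0) μ t = 1 + (Real.exp t - 1) * q := by
  have hAmeas : MeasurableSet {ω | B ω = true} := hB (measurableSet_singleton true)
  have hfun : (fun ω => Real.exp (t * (if B ω = true then (1:ℝ) else 0)))
      = (fun ω => 1 + (Real.exp t - 1) * Set.indicator {ω | B ω = true} (1 : Ω → ℝ) ω) := by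
    funext ω
    by_cases h : B ω = true
    · simp [Set.indicator_of_mem, h, Set.mem_setOf_eq]
    · simp [Set.indicator_of_notMem, h, Set.mem_setOf_eq]
  have hind : Integrable (Set.indicator {ω | B ω = true} (1 : Ω → ℝ)) μ :=
    (integrable_const (1:ℝ)).indicator hAmeas
  have hint : Integrable (fun ω => Real.exp (t * (if B ω = true then (1:ℝ) else 0))) μ := by
    rw [hfun]
    exact (integrable_const (1:ℝ)).add (hind.const_mul _)
  refine ⟨hint, ?_⟩
  rw [mgf, hfun, integral_add (integrable_const _) (hind.const_mul _), integral_const,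
    integral_const_mul, integral_indicator_one hAmeas, measureReal_def (s := {ω | B ω = true}), hq, ENNReal.toReal_ofReal hq0]
  simp

set_option maxHeartbeats 1000000 in
theorem stmt11 (n k : ℕ) (hkn : k < n) (δ ε q : ℝ)
    (hδ0 : 0 < δ) (hδ1 : δ ≤ 1) (hε : 0 < ε)
    (hq0 : 0 ≤ q) (hq1 : q ≤ 1)
    (Ω : Type) (_mΩ : MeasurableSpace Ω) (μ : Measure Ω) [IsProbabilityMeasure μ]
    (X : Fin k → Fin (n - k) → Ω → Bool)
    (hmeas : ∀ i j, Measurable (X i j))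
    (hindep : iIndepFun
      (fun e : Fin k × Fin (n - k) => X e.1 e.2) μ)
    (hber : ∀ i j, μ {ω | X i j ω = true} = ENNReal.ofReal q) :
    ENNReal.ofReal (1 - (k : ℝ) ^ (-(ε / 3))) ≤
      μ {ω | ((Finset.univ.filter
          (fun e : Fin k × Fin (n - k) => X e.1 e.2 ω = true)).card : ℝ) ≤
        (1 + δ) * q * k * ((n : ℝ) - k) +
          (Real.exp 1 * ε / δ ^ 2 + ε / 3) * Real.log k} := by
  -- trivial cases k ≤ 1
  rcases le_or_gt (k : ℝ) 1 with hk1 | hk1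
  · rcases Nat.lt_or_ge k 1 with hk0 | hk1'
    · -- k = 0
      interval_cases k
      have hset : {ω : Ω | ((Finset.univ.filter
          (fun e : Fin 0 × Fin (n - 0) => X e.1 e.2 ω = true)).card : ℝ) ≤
          (1 + δ) * q * ((0:ℕ) : ℝ) * ((n : ℝ) - ((0:ℕ):ℝ)) +
          (Real.exp 1 * ε / δ ^ 2 + ε / 3) * Real.log ((0:ℕ):ℝ)} = Set.univ := by
        ext ω
        simp
      rw [hset, measure_univ, Nat.cast_zero, Real.zero_rpow (neg_ne_zero.mpr (by positivity))]
      simp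
    · -- k = 1
      have hk : (k : ℝ) = 1 := le_antisymm hk1 (by exact_mod_cast hk1')
      rw [hk, Real.one_rpow]
      simp
  -- main case: k ≥ 2
  have hk0 : (0:ℝ) < k := by linarith
  have hL : 0 < Real.log k := Real.log_pos hk1
  set t : ℝ := Real.log (1 + δ) with ht_def
  have h1δ : (0:ℝ) < 1 + δ := by linarith
  have ht0 : 0 < t := Real.log_pos (by linarith)
  have hexpt : Real.exp t = 1 + δ := Real.exp_log h1δ
  set Y : Fin k × Fin (n - k) → Ω → ℝ :=
    fun e ω => if X e.1 e.2 ω = true then (1:ℝ) else 0 with hY_def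
  have hYmeas : ∀ e, Measurable (Y e) := fun e =>
    Measurable.ite ((hmeas e.1 e.2) (measurableSet_singleton true))
      measurable_const measurable_const
  have hYindep : iIndepFun Y μ := by
    have := hindep.comp (fun _ (b : Bool) => if b = true then (1:ℝ) else 0)
      (fun _ => Measurable.of_discrete)
    exact this
  have hmgf : ∀ e : Fin k × Fin (n - k), mgf (Y e) μ t = 1 + (Real.exp t - 1) * q := fun e =>
    (mgf_bernoulli_aux μ (X e.1 e.2) (hmeas e.1 e.2) q t (hber e.1 e.2) hq0).2
  have hint : ∀ e ∈ (Finset.univ : Finset (Fin k × Fin (n - k))),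
      Integrable (fun ω => Real.exp (t * Y e ω)) μ := fun e _ =>
    (mgf_bernoulli_aux μ (X e.1 e.2) (hmeas e.1 e.2) q t (hber e.1 e.2) hq0).1
  set S : Ω → ℝ := ∑ e : Fin k × Fin (n - k), Y e with hS_def
  have hSapp : ∀ ω, S ω = ∑ e : Fin k × Fin (n - k), Y e ω := fun ω => by
    rw [hS_def]; exact Finset.sum_apply ω Finset.univ Y
  have hSmeas : Measurable S := by
    have h : S = fun ω => ∑ e : Fin k × Fin (n - k), Y e ω := funext hSapp
    rw [h]
    exact Finset.measurable_sum _ (fun e _ => hYmeas e)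
  have hSint : Integrable (fun ω => Real.exp (t * S ω)) μ :=
    hYindep.integrable_exp_mul_sum hYmeas hint
  set m : ℕ := k * (n - k) with hm_def
  have hcard : (Finset.univ : Finset (Fin k × Fin (n - k))).card = m := by
    simp [hm_def]
  set a : ℝ := (1 + δ) * q * k * ((n : ℝ) - k) +
      (Real.exp 1 * ε / δ ^ 2 + ε / 3) * Real.log k with ha_def
  have hchern := measure_ge_le_exp_mul_mgf (μ := μ) (X := S) a ht0.le hSint
  have hmgfS : mgf S μ t = (1 + (Real.exp t - 1) * q) ^ m := by
    rw [hS_def, hYindep.mgf_sum hYmeas, Finset.prod_congr rfl (fun e _ => hmgf e),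
      Finset.prod_const, hcard]
  have hcast : ((n : ℝ) - k) = ((n - k : ℕ) : ℝ) := by
    rw [Nat.cast_sub hkn.le]
  have hmcast : (m : ℝ) = (k : ℝ) * ((n : ℝ) - k) := by
    rw [hm_def, Nat.cast_mul, hcast]
  -- main numeric bound
  have hbound : Real.exp (-t * a) * mgf S μ t ≤ (k : ℝ) ^ (-(ε / 3)) := by
    rw [hmgfS, hexpt]
    have h1 : (1 + (1 + δ - 1) * q) ^ m ≤ Real.exp (δ * q * m) := by
      have hle : 1 + (1 + δ - 1) * q ≤ Real.exp (δ * q) := by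
        have := Real.add_one_le_exp (δ * q)
        linarith
      calc (1 + (1 + δ - 1) * q) ^ m ≤ (Real.exp (δ * q)) ^ m :=
            pow_le_pow_left₀ (by nlinarith) hle m
        _ = Real.exp (δ * q * m) := by rw [← Real.exp_nat_mul]; ring_nf
    have h2 : Real.exp (-t * a) * (1 + (1 + δ - 1) * q) ^ m ≤
        Real.exp (-t * a + δ * q * m) := by
      rw [Real.exp_add]
      exact mul_le_mul_of_nonneg_left h1 (Real.exp_nonneg _)
    refine h2.trans ?_
    rw [show (k:ℝ) ^ (-(ε / 3)) = Real.exp (Real.log k * (-(ε/3))) from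
      (Real.rpow_def_of_pos hk0 _)]
    apply Real.exp_le_exp.2
    have hM0 : 0 ≤ q * (m:ℝ) := by positivity
    -- (1+δ) t ≥ δ
    have hx : δ / (1 + δ) ≤ t := by
      have h0 : Real.exp (δ / (1 + δ)) ≤ 1 + δ := by
        have h3 := Real.add_one_le_exp (-(δ / (1 + δ)))
        rw [Real.exp_neg] at h3
        have hE := Real.exp_pos (δ / (1 + δ))
        have h7 : Real.exp (δ / (1 + δ)) * (-(δ / (1 + δ)) + 1) ≤ 1 := by
          calc Real.exp (δ / (1 + δ)) * (-(δ / (1 + δ)) + 1)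
              ≤ Real.exp (δ / (1 + δ)) * (Real.exp (δ / (1 + δ)))⁻¹ :=
                mul_le_mul_of_nonneg_left h3 hE.le
            _ = 1 := mul_inv_cancel₀ hE.ne'
        have h8 : -(δ / (1 + δ)) + 1 = (1 + δ)⁻¹ := by
          field_simp
          ring
        rw [h8] at h7
        nlinarith [mul_le_mul_of_nonneg_right h7 h1δ.le,
          inv_mul_cancel₀ h1δ.ne']
      have := Real.log_le_log (Real.exp_pos _) h0
      rwa [Real.log_exp] at this
    have hkey1 : δ ≤ (1 + δ) * t := by
      have h9 := mul_le_mul_of_nonneg_left hx h1δ.le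
      have hid : (1 + δ) * (δ / (1 + δ)) = δ := by field_simp
      rw [hid] at h9
      exact h9
    -- t * c ≥ ε/3
    have hkey2 : ε / 3 ≤ t * (Real.exp 1 * ε / δ ^ 2 + ε / 3) := by
      have ht2 : δ / 2 ≤ t := by
        have hdd : δ / 2 ≤ δ / (1 + δ) :=
          div_le_div_of_nonneg_left hδ0.le (by linarith) (by linarith)
        linarith
      have he : (2.7:ℝ) ≤ Real.exp 1 := by nlinarith [Real.exp_one_gt_d9]
      have hc0 : (0:ℝ) ≤ Real.exp 1 * ε / δ ^ 2 + ε / 3 := by positivity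
      have step : δ / 2 * (Real.exp 1 * ε / δ ^ 2 + ε / 3)
          ≤ t * (Real.exp 1 * ε / δ ^ 2 + ε / 3) :=
        mul_le_mul_of_nonneg_right ht2 hc0
      have hid : δ / 2 * (Real.exp 1 * ε / δ ^ 2) = Real.exp 1 * ε / (2 * δ) := by
        field_simp
      have hmid : ε / 3 ≤ Real.exp 1 * ε / (2 * δ) := by
        rw [le_div_iff₀ (by positivity)]
        nlinarith
      have hrest : (0:ℝ) ≤ δ / 2 * (ε / 3) := by positivity
      nlinarith [step, hid, hmid, hrest]
    rw [ha_def]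
    have expand : -t * ((1 + δ) * q * k * ((n : ℝ) - k) +
        (Real.exp 1 * ε / δ ^ 2 + ε / 3) * Real.log k) + δ * q * (m:ℝ)
        = -((1 + δ) * t - δ) * (q * (m:ℝ))
          - (t * (Real.exp 1 * ε / δ ^ 2 + ε / 3)) * Real.log k := by
      rw [hmcast]; ring
    rw [expand]
    have term1 : -((1 + δ) * t - δ) * (q * (m:ℝ)) ≤ 0 :=
      mul_nonpos_of_nonpos_of_nonneg (by linarith) hM0
    have term2 : (ε / 3) * Real.log k ≤
        (t * (Real.exp 1 * ε / δ ^ 2 + ε / 3)) * Real.log k :=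
      mul_le_mul_of_nonneg_right hkey2 hL.le
    nlinarith [term1, term2]
  -- translate back
  have hsetEq : {ω | ((Finset.univ.filter
          (fun e : Fin k × Fin (n - k) => X e.1 e.2 ω = true)).card : ℝ) ≤ a}
      = {ω | S ω ≤ a} := by
    ext ω
    have hEq : ((Finset.univ.filter
        (fun e : Fin k × Fin (n - k) => X e.1 e.2 ω = true)).card : ℝ) = S ω := by
      rw [hSapp, Finset.card_filter]
      push_cast
      exact Finset.sum_congr rfl (fun e _ => by rw [hY_def])
    simp only [Set.mem_setOf_eq, hEq]
  rw [hsetEq]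
  have hsm : MeasurableSet {ω | S ω ≤ a} := hSmeas measurableSet_Iic
  have hcompl : μ {ω | S ω ≤ a}ᶜ ≤ ENNReal.ofReal ((k : ℝ) ^ (-(ε / 3))) := by
    have hsub : {ω | S ω ≤ a}ᶜ ⊆ {ω | a ≤ S ω} := by
      intro ω hω
      simp only [Set.mem_compl_iff, Set.mem_setOf_eq, not_le] at hω ⊢
      exact hω.le
    refine (measure_mono hsub).trans ?_
    have hfin : μ {ω | a ≤ S ω} ≠ ⊤ := measure_ne_top _ _
    rw [← ENNReal.ofReal_toReal hfin]
    exact ENNReal.ofReal_le_ofReal (hchern.trans hbound)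
  have hc := prob_compl_eq_one_sub (μ := μ) hsm
  have h1 : 1 - ENNReal.ofReal ((k : ℝ) ^ (-(ε / 3))) ≤ μ {ω | S ω ≤ a} := by
    have h2 : 1 - μ {ω | S ω ≤ a} ≤ ENNReal.ofReal ((k : ℝ) ^ (-(ε / 3))) := by
      rw [← hc]; exact hcompl
    exact tsub_le_iff_left.mpr (tsub_le_iff_right.mp h2)
  refine le_trans ?_ h1
  rw [ENNReal.ofReal_sub _ (by positivity), ENNReal.ofReal_one]
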